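/- At the point (β₀, α₀) = ((ρ+h)/3, ρ + 1/h), the value λ = 0 is a root of the characteristic function f(λ) = λ(ρ cot λ + cot(hλ)) − α + βλ² of multiplicity exactly four: extending f analytically by its value at 0, one has f(0) = f'(0) = f''(0) = f'''(0) = 0 and f''''(0) ≠ 0 (with f''''(0)/4! = γ₃ = (ρ+h³)/45 up to sign convention). -/

import Mathlib

open Filter

noncomputable section

lemma analyticAt_deriv {g : ℝ → ℝ} {x : ℝ} (hg : AnalyticAt ℝ g x) :
    AnalyticAt ℝ (deriv g) x := by
  obtain ⟨s, hs_mem, hs⟩ := hg.eventually_analyticAt.exists_mem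
  exact AnalyticOnNhd.deriv (fun y hy => hs y hy) x (mem_of_mem_nhds hs_mem)

lemma key_iter : ∀ (n : ℕ) (f g : ℝ → ℝ), AnalyticAt ℝ g 0 →
    (∀ᶠ x in nhds (0:ℝ), f x = x ^ n * g x) →
    (∀ k < n, iteratedDeriv k f 0 = 0) ∧ iteratedDeriv n f 0 = (Nat.factorial n : ℝ) * g 0 := by
  intro n
  induction n with
  | zero =>
    intro f g hg hfg
    refine ⟨fun k hk => absurd hk (Nat.not_lt_zero k), ?_⟩
    simpa using hfg.self_of_nhds
  | succ n ih =>
    intro f g hg hfg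
    have hg' : ∀ᶠ x in nhds (0:ℝ), AnalyticAt ℝ g x := hg.eventually_analyticAt
    have hd : ∀ᶠ x in nhds (0:ℝ),
        deriv f x = x ^ n * (((n:ℝ)+1) * g x + x * deriv g x) := by
      have h1 : deriv f =ᶠ[nhds (0:ℝ)] deriv (fun x => x ^ (n+1) * g x) :=
        Filter.EventuallyEq.deriv (f := fun x => x ^ (n+1) * g x) hfg
      filter_upwards [h1, hg'] with x hx hax
      rw [hx, deriv_fun_mul (differentiableAt_pow (n+1)) hax.differentiableAt,
        deriv_pow_field (n+1)]
      push_cast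
      ring
    have hh : AnalyticAt ℝ (fun x : ℝ => ((n:ℝ)+1) * g x + x * deriv g x) 0 :=
      (analyticAt_const.mul hg).add ((analyticAt_id (𝕜 := ℝ)).mul (analyticAt_deriv hg))
    obtain ⟨ih1, ih2⟩ := ih (deriv f) _ hh hd
    constructor
    · intro k hk
      match k with
      | 0 => simpa using hfg.self_of_nhds
      | k+1 =>
        rw [iteratedDeriv_succ', ih1 k (by omega)]
    · rw [iteratedDeriv_succ', ih2]
      simp only [deriv]
      push_cast [Nat.factorial_succ]
      ring

noncomputable def CC : ℝ → ℝ := fun y => ∑' n : ℕ, ((-1)^n / (Nat.factorial (2*n+4) : ℝ)) * y^n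
noncomputable def TT : ℝ → ℝ := fun y => ∑' n : ℕ, ((-1)^n / (Nat.factorial (2*n+5) : ℝ)) * y^n
noncomputable def Cf : ℝ → ℝ := fun x => CC (x^2)
noncomputable def Tf : ℝ → ℝ := fun x => TT (x^2)

lemma coef_bound (k : ℕ → ℕ) : ∀ n, |(-1:ℝ)^n / (Nat.factorial (k n) : ℝ)| ≤ 1 := by
  intro n
  rw [abs_div, abs_pow, abs_neg, abs_one, one_pow, abs_of_nonneg (by positivity)]
  rw [div_le_one (by positivity)]
  exact_mod_cast Nat.one_le_iff_ne_zero.mpr (Nat.factorial_ne_zero _)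

lemma cos_expand (x : ℝ) : Real.cos x = 1 - x^2/2 + x^4 * Cf x := by
  have h := Real.hasSum_cos x
  rw [← hasSum_nat_add_iff' 2] at h
  have e : (fun n : ℕ => (-1)^(n+2) * x ^ (2*(n+2)) / (Nat.factorial (2*(n+2)) : ℝ))
      = fun n : ℕ => x^4 * (((-1)^n / (Nat.factorial (2*n+4) : ℝ)) * (x^2)^n) := by
    funext n
    have : 2*(n+2) = 2*n+4 := by ring
    rw [this]
    rw [← pow_mul]
    ring
  rw [e] at h
  have ht := h.tsum_eq
  rw [tsum_mul_left] at ht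
  have hs : ∑ i ∈ Finset.range 2, (-1:ℝ)^i * x ^ (2*i) / (Nat.factorial (2*i) : ℝ) = 1 - x^2/2 := by
    simp [Finset.sum_range_succ, Nat.factorial]
    ring
  rw [hs] at ht
  have : x^4 * CC (x^2) = Real.cos x - (1 - x^2/2) := ht
  unfold Cf
  linarith

lemma sin_expand (x : ℝ) : Real.sin x = x - x^3/6 + x^5 * Tf x := by
  have h := Real.hasSum_sin x
  rw [← hasSum_nat_add_iff' 2] at h
  have e : (fun n : ℕ => (-1)^(n+2) * x ^ (2*(n+2)+1) / (Nat.factorial (2*(n+2)+1) : ℝ))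
      = fun n : ℕ => x^5 * (((-1)^n / (Nat.factorial (2*n+5) : ℝ)) * (x^2)^n) := by
    funext n
    have : 2*(n+2)+1 = 2*n+5 := by ring
    rw [this]
    rw [← pow_mul]
    ring
  rw [e] at h
  have ht := h.tsum_eq
  rw [tsum_mul_left] at ht
  have hs : ∑ i ∈ Finset.range 2, (-1:ℝ)^i * x ^ (2*i+1) / (Nat.factorial (2*i+1) : ℝ)
      = x - x^3/6 := by
    simp [Finset.sum_range_succ, Nat.factorial]
    ring
  rw [hs] at ht
  have : x^5 * TT (x^2) = Real.sin x - (x - x^3/6) := ht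
  unfold Tf
  linarith

lemma CC_zero : CC 0 = 1/24 := by
  unfold CC
  rw [tsum_eq_single 0 (fun n hn => by simp [zero_pow hn])]
  norm_num [Nat.factorial]

lemma TT_zero : TT 0 = 1/120 := by
  unfold TT
  rw [tsum_eq_single 0 (fun n hn => by simp [zero_pow hn])]
  norm_num [Nat.factorial]

lemma analyticAt_pseries (b : ℕ → ℝ) (hb : ∀ n, |b n| ≤ 1) :
    AnalyticAt ℝ (fun x : ℝ => ∑' n, b n * x ^ n) 0 := by
  set p := FormalMultilinearSeries.ofScalars ℝ b with hp
  have hrad : (1 : NNReal) ≤ p.radius := by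
    apply p.le_radius_of_bound 1
    intro n
    rw [hp, FormalMultilinearSeries.ofScalars_norm]
    simpa using hb n
  have h0 : (0 : ENNReal) < p.radius := lt_of_lt_of_le (by norm_num) hrad
  have := (p.hasFPowerSeriesOnBall h0).analyticAt
  convert this using 2 with x
  rw [show p.sum = FormalMultilinearSeries.ofScalarsSum b from rfl,
    FormalMultilinearSeries.ofScalars_sum_eq]
  simp [smul_eq_mul]

lemma sq_analytic : AnalyticAt ℝ (fun x : ℝ => x^2) 0 := (analyticAt_id (𝕜 := ℝ)).pow 2

lemma Cf_analytic : AnalyticAt ℝ Cf 0 := by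
  have h1 : AnalyticAt ℝ CC 0 := analyticAt_pseries _ (coef_bound (fun n => 2*n+4))
  have h2 : AnalyticAt ℝ CC ((fun x : ℝ => x^2) 0) := by norm_num; exact h1
  have h3 : AnalyticAt ℝ (CC ∘ fun x : ℝ => x^2) 0 := AnalyticAt.comp (f := fun x : ℝ => x^2) (x := (0:ℝ)) h2 sq_analytic
  exact h3

lemma Tf_analytic : AnalyticAt ℝ Tf 0 := by
  have h1 : AnalyticAt ℝ TT 0 := analyticAt_pseries _ (coef_bound (fun n => 2*n+5))
  have h2 : AnalyticAt ℝ TT ((fun x : ℝ => x^2) 0) := by norm_num; exact h1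
  have h3 : AnalyticAt ℝ (TT ∘ fun x : ℝ => x^2) 0 := AnalyticAt.comp (f := fun x : ℝ => x^2) (x := (0:ℝ)) h2 sq_analytic
  exact h3

lemma Cf_zero : Cf 0 = 1/24 := by simp [Cf, CC_zero]
lemma Tf_zero : Tf 0 = 1/120 := by simp [Tf, TT_zero]

def Sf : ℝ → ℝ := fun x => 1 - x^2/6 + x^4 * Tf x
def Rf : ℝ → ℝ := fun y => (Cf y - 1/18 - Tf y + y^2 * Tf y / 3) / Sf y

lemma sin_eq_mul_Sf (x : ℝ) : Real.sin x = x * Sf x := by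
  rw [sin_expand]; unfold Sf; ring

lemma Sf_analytic : AnalyticAt ℝ Sf 0 :=
  (analyticAt_const.sub (((analyticAt_id (𝕜 := ℝ)).pow 2).div analyticAt_const (by norm_num))).add
    (((analyticAt_id (𝕜 := ℝ)).pow 4).mul Tf_analytic)

lemma Sf_zero : Sf 0 = 1 := by unfold Sf; rw [Tf_zero]; norm_num

lemma Rf_analytic : AnalyticAt ℝ Rf 0 := by
  apply AnalyticAt.div
  · exact ((Cf_analytic.sub analyticAt_const).sub Tf_analytic).add
      ((((analyticAt_id (𝕜 := ℝ)).pow 2).mul Tf_analytic).div analyticAt_const (by norm_num))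
  · exact Sf_analytic
  · rw [Sf_zero]; exact one_ne_zero

lemma Rf_zero : Rf 0 = -(1/45) := by
  unfold Rf
  rw [Cf_zero, Tf_zero, Sf_zero]
  norm_num

lemma cos_div_Sf (y : ℝ) (hy : Sf y ≠ 0) :
    Real.cos y = (1 - y^2/3 + y^4 * Rf y) * Sf y := by
  have h1 : y^4 * Rf y * Sf y
      = y^4 * (Cf y - 1/18 - Tf y + y^2 * Tf y / 3) := by
    unfold Rf; field_simp
  have h2 : (1 - y^2/3 + y^4 * Rf y) * Sf y
      = (1 - y^2/3) * Sf y + y^4 * Rf y * Sf y := by ring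
  rw [h2, h1, cos_expand]
  unfold Sf
  ring

/-- At `(β₀, α₀) = ((ρ+h)/3, ρ + 1/h)`, the characteristic function
`f(λ) = λ(ρ cot λ + cot(hλ)) − α + βλ²`, extended by continuity at `0`,
has a root of multiplicity exactly four at `λ = 0`, with fourth Taylor
coefficient `±γ₃ = ±(ρ+h³)/45`. -/
theorem stmt_12 (ρ h : ℝ) (hρ : ρ ∈ Set.Ico (0:ℝ) 1) (hh : 0 < h)
    (α β : ℝ) (hα : α = ρ + 1/h) (hβ : β = (ρ + h)/3)
    (f : ℝ → ℝ)
    (hf : ∀ l : ℝ, l ≠ 0 → f l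
      = l * (ρ * (Real.cos l / Real.sin l) + Real.cos (h*l) / Real.sin (h*l)) - α + β * l^2)
    (hf0 : f 0 = ρ + 1/h - α) :
    f 0 = 0 ∧ deriv f 0 = 0 ∧ iteratedDeriv 2 f 0 = 0 ∧ iteratedDeriv 3 f 0 = 0 ∧
      iteratedDeriv 4 f 0 ≠ 0 ∧ |iteratedDeriv 4 f 0 / 24| = (ρ + h^3)/45 := by
  have hhne : h ≠ 0 := ne_of_gt hh
  set G : ℝ → ℝ := fun x => ρ * Rf x + h^3 * Rf (h*x) with hG
  have hRh : AnalyticAt ℝ (fun x : ℝ => Rf (h*x)) 0 := by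
    have h1 : AnalyticAt ℝ Rf ((fun x : ℝ => h*x) 0) := by
      simpa using Rf_analytic
    have h2 : AnalyticAt ℝ (fun x : ℝ => h*x) 0 := analyticAt_const.mul (analyticAt_id (𝕜 := ℝ))
    have h3 : AnalyticAt ℝ (Rf ∘ fun x : ℝ => h*x) 0 :=
      AnalyticAt.comp (f := fun x : ℝ => h*x) (x := (0:ℝ)) h1 h2
    exact h3
  have hGanal : AnalyticAt ℝ G 0 :=
    (analyticAt_const.mul Rf_analytic).add (analyticAt_const.mul hRh)
  have hG0 : G 0 = -((ρ + h^3)/45) := by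
    rw [hG]
    simp only [mul_zero, Rf_zero]
    ring
  -- eventual equality f x = x^4 * G x
  have hev : ∀ᶠ x in nhds (0:ℝ), f x = x ^ 4 * G x := by
    have e1 : ∀ᶠ x in nhds (0:ℝ), Sf x ≠ 0 := by
      have := Sf_analytic.continuousAt
      exact this.eventually_ne (by rw [Sf_zero]; exact one_ne_zero)
    have e2 : ∀ᶠ x in nhds (0:ℝ), Sf (h*x) ≠ 0 := by
      have hc : ContinuousAt (fun x : ℝ => Sf (h*x)) 0 := by
        apply ContinuousAt.comp (x := (0:ℝ)) (g := Sf) (f := fun x : ℝ => h*x)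
        · simpa using Sf_analytic.continuousAt
        · fun_prop
      exact hc.eventually_ne (by simpa [Sf_zero] using one_ne_zero)
    filter_upwards [e1, e2] with x hS1 hS2
    rcases eq_or_ne x 0 with rfl | hx
    · rw [hf0, hα]; ring
    · rw [hf x hx]
      have hsx : Real.sin x = x * Sf x := sin_eq_mul_Sf x
      have hshx : Real.sin (h*x) = (h*x) * Sf (h*x) := sin_eq_mul_Sf (h*x)
      have hcx := cos_div_Sf x hS1
      have hchx := cos_div_Sf (h*x) hS2
      rw [hsx, hshx, hcx, hchx, hα, hβ, hG]
      have hxne : x * Sf x ≠ 0 := mul_ne_zero hx hS1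
      have hhxne : (h*x) * Sf (h*x) ≠ 0 := mul_ne_zero (mul_ne_zero hhne hx) hS2
      have hS2' : Sf (x*h) ≠ 0 := by rwa [mul_comm]
      field_simp
      ring
  obtain ⟨hlow, h4⟩ := key_iter 4 f G hGanal hev
  have hpos : (0:ℝ) < ρ + h^3 := by
    have := hρ.1
    positivity
  have h4v : iteratedDeriv 4 f 0 = 24 * -((ρ + h^3)/45) := by
    rw [h4, hG0]; norm_num [Nat.factorial]
  refine ⟨?_, ?_, hlow 2 (by norm_num), hlow 3 (by norm_num), ?_, ?_⟩
  · rw [hf0, hα]; ring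
  · rw [← iteratedDeriv_one]; exact hlow 1 (by norm_num)
  · rw [h4v]
    intro hc
    nlinarith
  · rw [h4v]
    rw [abs_of_nonpos (by nlinarith)]
    ring

end
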